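/- Let g : ℝ₊ → (0,1] be continuous with g(t) ≤ g(0) + ∫_0^t ξ(g(s)) ds for all t ≥ 0, where ξ : (0,∞) → (0,∞) is continuous and increasing. Then g(t) ≤ γ(g(0), t) for all t ∈ [0, Ξ(g(0),∞)), where γ(u₀,·) is the inverse of v ↦ Ξ(u₀,v) = ∫_{u₀}^v ds/ξ(s). -/

import Mathlib

open intervalIntegral

/-- Bihari–LaSalle/Osgood comparison lemma: if `g : ℝ₊ → (0,1]` is continuous
with `g t ≤ g 0 + ∫_0^t ξ (g s) ds` for all `t ≥ 0`, where `ξ : (0,∞) → (0,∞)`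
is continuous and increasing, then `g t ≤ γ (g 0) t` for every `t` in the
domain of the inverse `γ (g 0)` of `v ↦ Ξ (g 0) v = ∫_{g 0}^v ds / ξ s`;
i.e. whenever `v ≥ g 0` satisfies `Ξ (g 0) v = t`, we have `g t ≤ v`. -/
theorem bihari_comparison (ξ : ℝ → ℝ)
    (hcont : ContinuousOn ξ (Set.Ioi 0))
    (hpos : ∀ s ∈ Set.Ioi (0 : ℝ), 0 < ξ s)
    (hmono : MonotoneOn ξ (Set.Ioi 0))
    (g : ℝ → ℝ) (hg_cont : ContinuousOn g (Set.Ici 0))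
    (hg_range : ∀ t ≥ (0 : ℝ), g t ∈ Set.Ioc (0 : ℝ) 1)
    (hg_ineq : ∀ t ≥ (0 : ℝ), g t ≤ g 0 + ∫ s in (0 : ℝ)..t, ξ (g s)) :
    ∀ t ≥ (0 : ℝ), ∀ v : ℝ, g 0 ≤ v → (∫ s in (g 0)..v, 1 / ξ s) = t →
      g t ≤ v := by
  intro t ht v hv hΞ
  set c : ℝ := g 0 with hc
  have hc0 : 0 < c := (hg_range 0 le_rfl).1
  -- the integrand `ξ ∘ g` is continuous on `Ici 0`
  have hξg_cont : ContinuousOn (fun s => ξ (g s)) (Set.Ici 0) := by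
    refine hcont.comp hg_cont fun s hs => (hg_range s hs).1
  have hξg_pos : ∀ s ∈ Set.Ici (0:ℝ), 0 < ξ (g s) := fun s hs =>
    hpos _ (hg_range s hs).1
  -- the majorant G
  set G : ℝ → ℝ := fun x => c + ∫ s in (0:ℝ)..x, ξ (g s) with hG
  have hG0 : G 0 = c := by simp [hG]
  -- G x ≥ c for x ∈ [0, t]
  have hGc : ∀ x ∈ Set.Icc (0:ℝ) t, c ≤ G x := by
    intro x hx
    have : 0 ≤ ∫ s in (0:ℝ)..x, ξ (g s) :=
      intervalIntegral.integral_nonneg hx.1 fun u hu => (hξg_pos u hu.1).le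
    simp [hG]; linarith
  have hGpos : ∀ x ∈ Set.Icc (0:ℝ) t, 0 < G x := fun x hx => lt_of_lt_of_le hc0 (hGc x hx)
  -- g x ≤ G x
  have hgG : ∀ x ∈ Set.Icc (0:ℝ) t, g x ≤ G x := fun x hx => hg_ineq x hx.1
  -- 1/ξ is continuous on Ioi 0
  have hinv_cont : ContinuousOn (fun s => 1 / ξ s) (Set.Ioi 0) := by
    exact continuousOn_const.div hcont fun s hs => (hpos s hs).ne'
  -- interval integrability of 1/ξ between positive points
  have hinv_int : ∀ a b : ℝ, 0 < a → 0 < b →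
      IntervalIntegrable (fun s => 1 / ξ s) MeasureTheory.volume a b := by
    intro a b ha hb
    refine (hinv_cont.mono ?_).intervalIntegrable
    intro x hx
    exact lt_of_lt_of_le (lt_min ha hb) hx.1
  -- Φ u = ∫_c^u 1/ξ
  set Φ : ℝ → ℝ := fun u => ∫ s in c..u, 1 / ξ s with hΦ
  have hΦ_deriv : ∀ u ∈ Set.Ioi (0:ℝ), HasDerivAt Φ (1 / ξ u) u := by
    intro u hu
    exact intervalIntegral.integral_hasDerivAt_right (hinv_int c u hc0 hu)
      (hinv_cont.stronglyMeasurableAtFilter isOpen_Ioi u hu)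
      (hinv_cont.continuousAt (isOpen_Ioi.mem_nhds hu))
  have hΦ_cont : ContinuousOn Φ (Set.Ioi 0) := fun u hu =>
    ((hΦ_deriv u hu).continuousAt).continuousWithinAt
  -- G has derivative ξ (g x) at interior points
  have hG_deriv : ∀ x ∈ Set.Ioo (0:ℝ) t, HasDerivAt G (ξ (g x)) x := by
    intro x hx
    have hint : IntervalIntegrable (fun s => ξ (g s)) MeasureTheory.volume 0 x :=
      (hξg_cont.mono (by
        intro u hu
        exact le_trans (le_min le_rfl hx.1.le) hu.1)).intervalIntegrable
    have hd : HasDerivAt (fun u => ∫ s in (0:ℝ)..u, ξ (g s)) (ξ (g x)) x := by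
      refine intervalIntegral.integral_hasDerivAt_right hint ?_ ?_
      · exact (hξg_cont.mono Set.Ioi_subset_Ici_self).stronglyMeasurableAtFilter isOpen_Ioi x hx.1
      · exact (hξg_cont.mono Set.Ioi_subset_Ici_self).continuousAt (isOpen_Ioi.mem_nhds hx.1)
    simpa [hG] using hd.const_add c
  -- G is continuous on [0, t]
  have hG_cont : ContinuousOn G (Set.Icc 0 t) := by
    have hint : MeasureTheory.IntegrableOn (fun s => ξ (g s)) (Set.uIcc 0 t) := by
      refine (hξg_cont.mono ?_).integrableOn_compact isCompact_uIcc
      rw [Set.uIcc_of_le ht]; exact fun u hu => hu.1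
    exact continuousOn_const.add
      ((intervalIntegral.continuousOn_primitive_interval hint).mono
        (by rw [Set.uIcc_of_le ht]))
  -- F x = x - Φ (G x) is monotone on [0, t]
  set F : ℝ → ℝ := fun x => x - Φ (G x) with hF
  have hF_mono : MonotoneOn F (Set.Icc 0 t) := by
    have hint' : interior (Set.Icc (0:ℝ) t) = Set.Ioo 0 t := interior_Icc
    have hFd : ∀ x ∈ Set.Ioo (0:ℝ) t,
        HasDerivAt F (1 - 1 / ξ (G x) * ξ (g x)) x := by
      intro x hx
      have hxI : x ∈ Set.Icc (0:ℝ) t := ⟨hx.1.le, hx.2.le⟩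
      have hcomp : HasDerivAt (fun y => Φ (G y)) (1 / ξ (G x) * ξ (g x)) x :=
        (hΦ_deriv (G x) (hGpos x hxI)).comp x (hG_deriv x hx)
      simpa [hF] using (hasDerivAt_id x).fun_sub hcomp
    refine monotoneOn_of_deriv_nonneg (convex_Icc 0 t) ?_ ?_ ?_
    · refine (continuousOn_id.sub (hΦ_cont.comp hG_cont fun x hx => hGpos x hx))
    · intro x hx
      rw [hint'] at hx
      exact (hFd x hx).differentiableAt.differentiableWithinAt
    · intro x hx
      rw [hint'] at hx
      rw [(hFd x hx).deriv]
      have hxI : x ∈ Set.Icc (0:ℝ) t := ⟨hx.1.le, hx.2.le⟩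
      have h1 : ξ (g x) ≤ ξ (G x) :=
        hmono (hg_range x hx.1.le).1 (hGpos x hxI) (hgG x hxI)
      have h2 : 0 < ξ (G x) := hpos _ (hGpos x hxI)
      have : 1 / ξ (G x) * ξ (g x) ≤ 1 := by
        rw [div_mul_eq_mul_div, one_mul, div_le_one h2]; exact h1
      linarith
  -- hence Φ (G t) ≤ t
  have hF0 : F 0 = 0 := by simp [hF, hG0, hΦ]
  have hFt : (0:ℝ) ≤ F t := by
    have := hF_mono (Set.left_mem_Icc.2 ht) (Set.right_mem_Icc.2 ht) ht
    rwa [hF0] at this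
  have hΦGt : Φ (G t) ≤ t := by simpa [hF, sub_nonneg] using hFt
  -- conclude G t ≤ v
  have htI : t ∈ Set.Icc (0:ℝ) t := Set.right_mem_Icc.2 ht
  have hv0 : 0 < v := lt_of_lt_of_le hc0 hv
  have hGtv : G t ≤ v := by
    by_contra h
    push_neg at h
    have hsplit : (∫ s in c..v, 1 / ξ s) + (∫ s in v..(G t), 1 / ξ s)
        = ∫ s in c..(G t), 1 / ξ s :=
      intervalIntegral.integral_add_adjacent_intervals (hinv_int c v hc0 hv0)
        (hinv_int v (G t) hv0 (hGpos t htI))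
    have hposint : 0 < ∫ s in v..(G t), 1 / ξ s := by
      refine intervalIntegral.intervalIntegral_pos_of_pos_on
        (hinv_int v (G t) hv0 (hGpos t htI)) ?_ h
      intro x hx
      have hx0 : 0 < x := lt_trans hv0 hx.1
      exact one_div_pos.2 (hpos x hx0)
    have : t < Φ (G t) := by
      show t < ∫ s in c..(G t), 1 / ξ s
      rw [← hsplit, hΞ]; linarith
    linarith
  exact le_trans (hgG t htI) hGtv
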